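/- Let ℓ be a prime and n ≥ 2. There exists a proper Young subgroup of the symmetric group S_n (i.e., a subgroup of the form S_{λ_1} × ⋯ × S_{λ_r} for a composition λ of n with r ≥ 2 parts) containing a Sylow ℓ-subgroup of S_n if and only if n is not a power of ℓ. -/

import Mathlib

open Nat

/-- The index of the block (of the partition of `{0, …, n-1}` into consecutive intervals of
sizes `lam 0, lam 1, …`) containing `i`. -/
def blockOf (lam : List ℕ) (i : ℕ) : ℕ :=
  ((List.range lam.length).filter fun j => (lam.take (j + 1)).sum ≤ i).length

/-- The Young subgroup of `S_n` associated to a composition `lam` of `n`: the permutations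
preserving each consecutive block. -/
def youngSubgroup (n : ℕ) (lam : List ℕ) : Subgroup (Equiv.Perm (Fin n)) where
  carrier := {σ | ∀ i : Fin n, blockOf lam (σ i) = blockOf lam i}
  one_mem' := fun _ => rfl
  mul_mem' := by
    intro σ τ hσ hτ i
    simpa [Equiv.Perm.mul_apply] using (hσ (τ i)).trans (hτ i)
  inv_mem' := by
    intro σ hσ i
    simpa [Equiv.Perm.coe_inv, Equiv.apply_symm_apply] using (hσ (σ⁻¹ i)).symm

lemma digits_sum_pos {b c : ℕ} (hb : 1 < b) (hc : 0 < c) : 0 < (b.digits c).sum := by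
  have h1 := Nat.getLast_digit_ne_zero b hc.ne'
  have hmem := List.getLast_mem (l := b.digits c) (by simpa using Nat.digits_ne_nil_iff_ne_zero.mpr hc.ne')
  have := List.single_le_sum (l := b.digits c) (fun x _ => Nat.zero_le x) _ hmem
  omega

lemma digits_pow_sum {ℓ : ℕ} (hl : 1 < ℓ) (k : ℕ) : (ℓ.digits (ℓ ^ k)).sum = 1 := by
  have h1 : ℓ.digits 1 = [1] := by
    rw [Nat.digits_def' hl one_pos]
    simp [Nat.mod_eq_of_lt hl, Nat.div_eq_of_lt hl]
  have : ℓ ^ k = ℓ ^ k * 1 := by ring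
  rw [this, Nat.digits_base_pow_mul hl one_pos, h1]
  simp

-- Legendre scaled, in factorization form
lemma legendre_fact (ℓ : ℕ) (hℓ : ℓ.Prime) (c : ℕ) :
    (ℓ - 1) * (c !).factorization ℓ + (ℓ.digits c).sum = c := by
  haveI : Fact ℓ.Prime := ⟨hℓ⟩
  have h := sub_one_mul_padicValNat_factorial (p := ℓ) c
  have h2 : (ℓ.digits c).sum ≤ c := Nat.digit_sum_le ℓ c
  rw [Nat.factorization_def _ hℓ]
  omega

lemma digits_sum_pred {ℓ u : ℕ} (hℓ : ℓ.Prime) (hu : 2 ≤ u) (hlu : ¬ ℓ ∣ u) :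
    (ℓ.digits u).sum = (ℓ.digits (u - 1)).sum + 1 := by
  have hl := hℓ.one_lt
  have h1 : ℓ.digits u = u % ℓ :: ℓ.digits (u / ℓ) := Nat.digits_def' hl (by omega)
  have h2 : ℓ.digits (u - 1) = (u - 1) % ℓ :: ℓ.digits ((u - 1) / ℓ) :=
    Nat.digits_def' hl (by omega)
  have hdiv : u / ℓ = (u - 1) / ℓ := by
    have : (u - 1 + 1) / ℓ = (u - 1) / ℓ + if ℓ ∣ (u - 1 + 1) then 1 else 0 := Nat.succ_div
    rw [if_neg (by simpa [Nat.sub_add_cancel (by omega : 1 ≤ u)] using hlu)] at this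
    simpa [Nat.sub_add_cancel (by omega : 1 ≤ u)] using this
  have hmod : u % ℓ = (u - 1) % ℓ + 1 := by
    have e1 := Nat.div_add_mod u ℓ
    have e2 := Nat.div_add_mod (u - 1) ℓ
    rw [← hdiv] at e2
    have hb : u % ℓ ≠ 0 := fun h => hlu (Nat.dvd_of_mod_eq_zero h)
    set q := ℓ * (u / ℓ)
    omega
  rw [h1, h2, hdiv, hmod]
  simp [List.sum_cons]; ring

lemma val_split {ℓ n : ℕ} (hℓ : ℓ.Prime) (hn : 2 ≤ n) (hnp : ¬ ∃ k, n = ℓ ^ k) :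
    ℓ ^ (n.factorization ℓ) < n ∧
    ((ℓ ^ (n.factorization ℓ))!).factorization ℓ
      + ((n - ℓ ^ (n.factorization ℓ))!).factorization ℓ = (n !).factorization ℓ := by
  have hl := hℓ.one_lt
  set k := n.factorization ℓ with hk
  have hd : ℓ ^ k ∣ n := Nat.ordProj_dvd n ℓ
  set u := n / ℓ ^ k with hudef
  have hu : n = ℓ ^ k * u := (Nat.mul_div_cancel' hd).symm
  have hlu : ¬ ℓ ∣ u := Nat.not_dvd_ordCompl hℓ (by omega)
  have hu2 : 2 ≤ u := by
    rcases Nat.lt_or_ge u 2 with h | h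
    · interval_cases u
      · omega
      · exact absurd ⟨k, by omega⟩ hnp
    · exact h
  have hmpos : 0 < ℓ ^ k := Nat.pow_pos (by omega)
  have hmlt : ℓ ^ k < n := by
    calc ℓ ^ k = ℓ ^ k * 1 := by ring
    _ < ℓ ^ k * u := by exact Nat.mul_lt_mul_of_le_of_lt (le_refl _) (by omega) hmpos
    _ = n := hu.symm
  refine ⟨hmlt, ?_⟩
  have hsub : n - ℓ ^ k = ℓ ^ k * (u - 1) := by
    rw [Nat.mul_sub, hu]; ring_nf
  -- digit sums
  have hsm : (ℓ.digits (ℓ ^ k)).sum = 1 := digits_pow_sum hl k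
  have hsj : (ℓ.digits (n - ℓ ^ k)).sum = (ℓ.digits (u - 1)).sum := by
    rw [hsub, Nat.digits_base_pow_mul hl (by omega)]; simp
  have hsn : (ℓ.digits n).sum = (ℓ.digits (u - 1)).sum + 1 := by
    rw [hu, Nat.digits_base_pow_mul hl (by omega)]
    simpa using digits_sum_pred hℓ hu2 hlu
  have e1 := legendre_fact ℓ hℓ (ℓ ^ k)
  have e2 := legendre_fact ℓ hℓ (n - ℓ ^ k)
  have e3 := legendre_fact ℓ hℓ n
  rw [hsm] at e1; rw [hsj] at e2; rw [hsn] at e3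
  set A := ((ℓ ^ k)!).factorization ℓ
  set B := ((n - ℓ ^ k)!).factorization ℓ
  set C := (n !).factorization ℓ
  have hmul : (ℓ - 1) * (A + B) = (ℓ - 1) * C := by
    rw [Nat.mul_add]
    set x := (ℓ - 1) * A; set y := (ℓ - 1) * B; set z := (ℓ - 1) * C
    omega
  exact Nat.eq_of_mul_eq_mul_left (by omega) hmul

lemma blockOf_pair (m j x : ℕ) : blockOf [m, j] x = (if m ≤ x then 1 else 0) + (if m + j ≤ x then 1 else 0) := by
  simp only [blockOf, List.length_cons, List.length_nil]
  norm_num [List.range_succ, List.filter]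
  by_cases h1 : m ≤ x <;> by_cases h2 : m + j ≤ x <;> simp [h1, h2]

/-- conjugation of Perm by an equiv, as a MonoidHom -/
def permMapHom {α β : Type*} (e : α ≃ β) : Equiv.Perm α →* Equiv.Perm β where
  toFun σ := (e.symm.trans σ).trans e
  map_one' := by ext x; simp
  map_mul' := by intro σ τ; ext x; simp

lemma permMapHom_injective {α β : Type*} (e : α ≃ β) : Function.Injective (permMapHom e) := by
  intro σ τ h
  ext x
  have := congrArg (fun π => π.toFun (e x)) h
  simpa [permMapHom] using this



def splitEquiv (m j n : ℕ) (h : m + j = n) : (Fin m ⊕ Fin j) ≃ Fin n :=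
  finSumFinEquiv.trans (finCongr h)

lemma splitEquiv_inl (m j n : ℕ) (h : m + j = n) (a : Fin m) :
    (splitEquiv m j n h (Sum.inl a) : ℕ) = (a : ℕ) := by
  simp [splitEquiv, finCongr]

lemma splitEquiv_inr (m j n : ℕ) (h : m + j = n) (b : Fin j) :
    (splitEquiv m j n h (Sum.inr b) : ℕ) = m + (b : ℕ) := by
  simp [splitEquiv, finCongr]

def splitHom (m j n : ℕ) (h : m + j = n) :
    Equiv.Perm (Fin m) × Equiv.Perm (Fin j) →* Equiv.Perm (Fin n) :=
  (permMapHom (splitEquiv m j n h)).comp (Equiv.Perm.sumCongrHom _ _)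

lemma splitHom_apply (m j n : ℕ) (h : m + j = n) (σ : Equiv.Perm (Fin m))
    (τ : Equiv.Perm (Fin j)) (x : Fin n) :
    splitHom m j n h (σ, τ) x =
      splitEquiv m j n h (Equiv.sumCongr σ τ ((splitEquiv m j n h).symm x)) := rfl

lemma splitHom_injective (m j n : ℕ) (h : m + j = n) :
    Function.Injective (splitHom m j n h) := by
  have heq : ⇑(splitHom m j n h) = ⇑(permMapHom (splitEquiv m j n h)) ∘
      ⇑(Equiv.Perm.sumCongrHom (Fin m) (Fin j)) := rfl
  rw [heq]
  exact (permMapHom_injective _).comp Equiv.Perm.sumCongrHom_injective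

lemma splitHom_mem_young (m j n : ℕ) (h : m + j = n)
    (p : Equiv.Perm (Fin m) × Equiv.Perm (Fin j)) :
    splitHom m j n h p ∈ youngSubgroup n [m, j] := by
  obtain ⟨σ, τ⟩ := p
  intro i
  set e := splitEquiv m j n h
  have key : ∀ x : Fin n, ((splitHom m j n h (σ, τ)) x : ℕ) < m ↔ (x : ℕ) < m := by
    intro x
    rcases hx : e.symm x with a | b
    · have hxa : x = e (Sum.inl a) := by rw [← hx]; simp
      rw [splitHom_apply, show (splitEquiv m j n h).symm x = Sum.inl a from hx]
      simp only [Equiv.sumCongr_apply, Sum.map_inl]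
      rw [splitEquiv_inl, hxa, splitEquiv_inl]
      exact ⟨fun _ => a.isLt, fun _ => (σ a).isLt⟩
    · have hxb : x = e (Sum.inr b) := by rw [← hx]; simp
      rw [splitHom_apply, show (splitEquiv m j n h).symm x = Sum.inr b from hx]
      simp only [Equiv.sumCongr_apply, Sum.map_inr]
      rw [splitEquiv_inr, hxb, splitEquiv_inr]
      omega
  show blockOf [m, j] ((splitHom m j n h (σ, τ)) i : ℕ) = blockOf [m, j] (i : ℕ)
  rw [blockOf_pair, blockOf_pair]
  have h1 := key i
  have h2 : ((splitHom m j n h (σ, τ)) i : ℕ) < n := Fin.isLt _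
  have h3 : (i : ℕ) < n := i.isLt
  by_cases hc : (i : ℕ) < m
  · have hc2 : ((splitHom m j n h (σ, τ)) i : ℕ) < m := h1.mpr hc
    rw [if_neg (by omega), if_neg (by omega), if_neg (by omega), if_neg (by omega)]
  · have hc2 : ¬ ((splitHom m j n h (σ, τ)) i : ℕ) < m := fun hh => hc (h1.mp hh)
    rw [if_pos (by omega), if_neg (by omega), if_pos (by omega), if_neg (by omega)]

set_option maxHeartbeats 1000000 in
lemma exists_sylow_le_young (ℓ m j n : ℕ) (hℓ : ℓ.Prime) (hmn : m + j = n)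
    (hval : (m !).factorization ℓ + (j !).factorization ℓ = (n !).factorization ℓ) :
    ∃ S : Sylow ℓ (Equiv.Perm (Fin n)), (S : Subgroup (Equiv.Perm (Fin n))) ≤
      youngSubgroup n [m, j] := by
  haveI : Fact ℓ.Prime := ⟨hℓ⟩
  obtain ⟨P₁⟩ : Nonempty (Sylow ℓ (Equiv.Perm (Fin m))) := Sylow.nonempty
  obtain ⟨P₂⟩ : Nonempty (Sylow ℓ (Equiv.Perm (Fin j))) := Sylow.nonempty
  have hψinj := splitHom_injective m j n hmn
  have hcard : Nat.card
        (Subgroup.map (splitHom m j n hmn) ((P₁ : Subgroup (Equiv.Perm (Fin m))).prod (P₂ : Subgroup (Equiv.Perm (Fin j))))) =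
      ℓ ^ (Nat.card (Equiv.Perm (Fin n))).factorization ℓ := by
    have c1 : Nat.card
          (Subgroup.map (splitHom m j n hmn) ((P₁ : Subgroup (Equiv.Perm (Fin m))).prod (P₂ : Subgroup (Equiv.Perm (Fin j)))))
        = Nat.card ((P₁ : Subgroup (Equiv.Perm (Fin m))).prod (P₂ : Subgroup (Equiv.Perm (Fin j)))) :=
      (Nat.card_congr (Subgroup.equivMapOfInjective ((P₁ : Subgroup (Equiv.Perm (Fin m))).prod (P₂ : Subgroup (Equiv.Perm (Fin j)))) (splitHom m j n hmn) hψinj).toEquiv).symm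
    have c2 : Nat.card ((P₁ : Subgroup (Equiv.Perm (Fin m))).prod (P₂ : Subgroup (Equiv.Perm (Fin j)))) =
        Nat.card (P₁ : Subgroup (Equiv.Perm (Fin m))) * Nat.card (P₂ : Subgroup (Equiv.Perm (Fin j))) := by
      rw [Nat.card_congr (Subgroup.prodEquiv _ _).toEquiv, Nat.card_prod]
    have c3 : Nat.card (P₁ : Subgroup (Equiv.Perm (Fin m))) = ℓ ^ ((m !).factorization ℓ) := by
      rw [P₁.card_eq_multiplicity, Nat.card_eq_fintype_card, Fintype.card_perm, Fintype.card_fin]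
    have c4 : Nat.card (P₂ : Subgroup (Equiv.Perm (Fin j))) = ℓ ^ ((j !).factorization ℓ) := by
      rw [P₂.card_eq_multiplicity, Nat.card_eq_fintype_card, Fintype.card_perm, Fintype.card_fin]
    have c5 : Nat.card (Equiv.Perm (Fin n)) = n ! := by
      rw [Nat.card_eq_fintype_card, Fintype.card_perm, Fintype.card_fin]
    rw [c1, c2, c3, c4, c5, ← pow_add, hval]
  refine ⟨Sylow.ofCard _ hcard, ?_⟩
  rw [Sylow.coe_ofCard]
  rintro x ⟨p, _, rfl⟩
  exact splitHom_mem_young m j n hmn p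

lemma blockOf_lt (lam : List ℕ) (i : ℕ) (hi : i < lam.sum) (hne : lam ≠ []) :
    blockOf lam i < lam.length := by
  set r := lam.length with hr
  have hr1 : 1 ≤ r := by
    exact List.length_pos_iff.mpr hne
  have hmem : r - 1 ∈ List.range r := List.mem_range.mpr (by omega)
  have hnot : ¬ ((lam.take (r - 1 + 1)).sum ≤ i) := by
    have : r - 1 + 1 = r := by omega
    rw [this, hr, List.take_length]
    omega
  have hsub : ((List.range r).filter fun j => (lam.take (j + 1)).sum ≤ i).length <
      (List.range r).length := by
    rcases Nat.lt_or_ge (((List.range r).filter fun j => (lam.take (j + 1)).sum ≤ i).length)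
      ((List.range r).length) with h | h
    · exact h
    · exfalso
      have hlen : ((List.range r).filter fun j => (lam.take (j + 1)).sum ≤ i).length =
          (List.range r).length :=
        le_antisymm (List.length_filter_le _ _) h
      have heq := (List.filter_sublist (l := List.range r)
        (p := fun j => decide ((lam.take (j + 1)).sum ≤ i))).eq_of_length hlen
      have : (r - 1) ∈ (List.range r).filter fun j => (lam.take (j + 1)).sum ≤ i := by
        rw [heq]; exact hmem
      exact hnot (by simpa using (List.mem_filter.mp this).2)
  simpa [blockOf] using hsub

lemma blockOf_zero (a : ℕ) (ha : 0 < a) (rest : List ℕ) : blockOf (a :: rest) 0 = 0 := by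
  unfold blockOf
  rw [List.filter_eq_nil_iff.mpr, List.length_nil]
  intro j _
  simp only [List.take_succ_cons, List.sum_cons, decide_eq_true_eq]
  intro h; have := of_decide_eq_true h
  omega

lemma blockOf_last_pos (a : ℕ) (rest : List ℕ) (x : ℕ) (hax : a ≤ x) :
    0 < blockOf (a :: rest) x := by
  unfold blockOf
  apply List.length_pos_iff.mpr
  apply List.ne_nil_of_mem (a := 0)
  rw [List.mem_filter]
  constructor
  · simp
  · simpa using hax

def resHom' (n : ℕ) (lam : List ℕ) :
    youngSubgroup n lam →*
      (∀ t : Fin lam.length, Equiv.Perm {i : Fin n // blockOf lam (i : ℕ) = (t : ℕ)}) where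
  toFun σ t := Equiv.Perm.subtypePerm (σ : Equiv.Perm (Fin n))
      (fun i => by rw [show blockOf lam (((σ : Equiv.Perm (Fin n))) i : ℕ) = blockOf lam (i : ℕ) from σ.2 i])
  map_one' := by
    funext t
    ext i
    simp [Equiv.Perm.subtypePerm_apply]
  map_mul' σ τ := by
    funext t
    ext i
    simp [Equiv.Perm.subtypePerm_apply]
    rfl

lemma resHom'_injective (n : ℕ) (lam : List ℕ) (hlt : ∀ i : Fin n, blockOf lam (i : ℕ) < lam.length) :
    Function.Injective (resHom' n lam) := by
  rw [injective_iff_map_eq_one]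
  intro σ hσ
  have hfix : ∀ i : Fin n, (σ : Equiv.Perm (Fin n)) i = i := by
    intro i
    have ht := congrFun hσ ⟨blockOf lam (i : ℕ), hlt i⟩
    have := congrArg (fun π => (π ⟨i, rfl⟩ : {x : Fin n // blockOf lam (x : ℕ) = blockOf lam (i : ℕ)})) ht
    simpa [resHom', Equiv.Perm.subtypePerm_apply, Subtype.ext_iff] using this
  ext i
  · exact congrArg Fin.val (hfix i)

lemma no_sylow_le_young (ℓ n k : ℕ) (hℓ : ℓ.Prime) (hn : 2 ≤ n) (hpow : n = ℓ ^ k)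
    (lam : List ℕ) (hpos : ∀ x ∈ lam, 0 < x) (hsum : lam.sum = n) (hlen : 2 ≤ lam.length)
    (S : Sylow ℓ (Equiv.Perm (Fin n)))
    (hle : (S : Subgroup (Equiv.Perm (Fin n))) ≤ youngSubgroup n lam) :
    False := by
  haveI : Fact ℓ.Prime := ⟨hℓ⟩
  have hne : lam ≠ [] := by intro h; rw [h] at hlen; simp at hlen
  set r := lam.length with hr
  have hlt : ∀ i : Fin n, blockOf lam (i : ℕ) < r := fun i =>
    blockOf_lt lam i (by rw [hsum]; exact i.isLt) hne
  set c : Fin r → ℕ := fun t => Fintype.card {i : Fin n // blockOf lam (i : ℕ) = (t : ℕ)}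
    with hc
  set v : Fin r → ℕ := fun t => ((c t)!).factorization ℓ with hv
  set sfun : Fin r → ℕ := fun t => (ℓ.digits (c t)).sum with hsfun
  set N : ℕ := ∏ t : Fin r, (c t)! with hN
  set V : ℕ := (n !).factorization ℓ with hV
  -- divisibility chain
  have h1 : Nat.card (S : Subgroup (Equiv.Perm (Fin n))) ∣ Nat.card (youngSubgroup n lam) :=
    Subgroup.card_dvd_of_le hle
  have h2 : Nat.card (youngSubgroup n lam) ∣ N := by
    have hinj := resHom'_injective n lam hlt
    have hdvd := Subgroup.card_subgroup_dvd_card (resHom' n lam).range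
    have heq : Nat.card (youngSubgroup n lam) = Nat.card (resHom' n lam).range :=
      Nat.card_congr (MonoidHom.ofInjective hinj).toEquiv
    rw [heq]
    refine hdvd.trans (dvd_of_eq ?_)
    rw [Nat.card_pi]
    refine Finset.prod_congr rfl fun t _ => ?_
    rw [Nat.card_eq_fintype_card, Fintype.card_perm]
  have hSV : Nat.card (S : Subgroup (Equiv.Perm (Fin n))) = ℓ ^ V := by
    rw [S.card_eq_multiplicity, Nat.card_eq_fintype_card, Fintype.card_perm, Fintype.card_fin]
  have hdvdN : ℓ ^ V ∣ N := hSV ▸ h1.trans h2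
  have hNne : N ≠ 0 := by
    rw [hN]
    exact Finset.prod_ne_zero_iff.mpr fun t _ => factorial_ne_zero _
  have hfacN : N.factorization ℓ = ∑ t : Fin r, v t := by
    rw [hN, Nat.factorization_prod fun t _ => factorial_ne_zero _]
    simp [Finset.sum_apply', hv]
  -- sum of block sizes is n
  have hsumc : ∑ t : Fin r, c t = n := by
    have h := Fintype.card_congr
      (Equiv.sigmaFiberEquiv (fun i : Fin n => (⟨blockOf lam (i : ℕ), hlt i⟩ : Fin r)))
    rw [Fintype.card_sigma, Fintype.card_fin] at h
    rw [← h]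
    refine Finset.sum_congr rfl fun t _ => ?_
    exact Fintype.card_congr (Equiv.subtypeEquivRight fun i => by
      rw [Fin.ext_iff])
  -- two nonempty blocks
  obtain ⟨a, l1, hl1⟩ := List.exists_cons_of_ne_nil hne
  have hl1ne : l1 ≠ [] := by
    intro h
    rw [hr, hl1, h] at hlen
    simp at hlen
  obtain ⟨b, rest, hl2⟩ := List.exists_cons_of_ne_nil hl1ne
  have hlam : lam = a :: b :: rest := by rw [hl1, hl2]
  have ha : 0 < a := hpos a (by rw [hlam]; exact List.mem_cons_self)
  have hb : 0 < b := hpos b (by rw [hlam]; exact List.mem_cons_of_mem _ List.mem_cons_self)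
  have han : a ≤ n - 1 := by
    have hab : a + b ≤ lam.sum := by
      rw [hlam]
      simp only [List.sum_cons]
      omega
    omega
  have hr2 : 2 ≤ r := hlen
  have hn1 : n - 1 < n := by omega
  have h0n : 0 < n := by omega
  have hb0 : blockOf lam 0 = 0 := by
    rw [hlam]; exact blockOf_zero a ha _
  have hb1 : 0 < blockOf lam (n - 1) := by
    rw [hlam]; exact blockOf_last_pos a _ (n - 1) han
  set t0 : Fin r := ⟨0, by omega⟩ with ht0
  set t1 : Fin r := ⟨blockOf lam (n - 1), hlt ⟨n - 1, hn1⟩⟩ with ht1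
  have ht01 : t0 ≠ t1 := by
    intro h
    rw [Fin.ext_iff] at h
    simp only [ht0, ht1] at h
    omega
  have hc0 : 0 < c t0 := Fintype.card_pos_iff.mpr ⟨⟨⟨0, h0n⟩, hb0⟩⟩
  have hc1 : 0 < c t1 := Fintype.card_pos_iff.mpr ⟨⟨⟨n - 1, hn1⟩, rfl⟩⟩
  have hs0 : 1 ≤ sfun t0 := digits_sum_pos hℓ.one_lt hc0
  have hs1 : 1 ≤ sfun t1 := digits_sum_pos hℓ.one_lt hc1
  have hssum : 2 ≤ ∑ t : Fin r, sfun t := by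
    have hpair : sfun t0 + sfun t1 = ∑ t ∈ ({t0, t1} : Finset (Fin r)), sfun t :=
      (Finset.sum_pair ht01).symm
    have hsub : ∑ t ∈ ({t0, t1} : Finset (Fin r)), sfun t ≤ ∑ t : Fin r, sfun t :=
      Finset.sum_le_sum_of_subset (Finset.subset_univ _)
    omega
  -- Legendre sums
  have hsumeq : (ℓ - 1) * (∑ t : Fin r, v t) + (∑ t : Fin r, sfun t) = n := by
    rw [Finset.mul_sum, ← Finset.sum_add_distrib]
    rw [← hsumc]
    exact Finset.sum_congr rfl fun t _ => legendre_fact ℓ hℓ (c t)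
  have hVeq : (ℓ - 1) * V + 1 = n := by
    have := legendre_fact ℓ hℓ n
    rw [show (ℓ.digits n).sum = 1 from by rw [hpow]; exact digits_pow_sum hℓ.one_lt k] at this
    exact this
  have hlt2 : ∑ t : Fin r, v t < V := by
    by_contra hcon
    push_neg at hcon
    have hmul : (ℓ - 1) * V ≤ (ℓ - 1) * ∑ t : Fin r, v t :=
      Nat.mul_le_mul_left _ hcon
    set x := (ℓ - 1) * ∑ t : Fin r, v t
    set y := (ℓ - 1) * V
    omega
  have := (Nat.Prime.pow_dvd_iff_le_factorization hℓ hNne).mp hdvdN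
  omega

/-- For `n ≥ 2`, there is a proper Young subgroup of `S_n` containing a Sylow
`ℓ`-subgroup of `S_n` if and only if `n` is not a power of `ℓ`. -/
theorem stmt5 (ℓ n : ℕ) (hℓ : ℓ.Prime) (hn : 2 ≤ n) :
    (∃ lam : List ℕ, (∀ x ∈ lam, 0 < x) ∧ lam.sum = n ∧ 2 ≤ lam.length ∧
        ∃ S : Sylow ℓ (Equiv.Perm (Fin n)), (S : Subgroup (Equiv.Perm (Fin n))) ≤
          youngSubgroup n lam) ↔
      ¬ ∃ k : ℕ, n = ℓ ^ k := by
  constructor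
  · rintro ⟨lam, hpos, hsum, hlen, S, hle⟩ ⟨k, hpow⟩
    exact no_sylow_le_young ℓ n k hℓ hn hpow lam hpos hsum hlen S hle
  · intro hnp
    obtain ⟨hmlt, hval⟩ := val_split hℓ hn hnp
    have hm : 0 < ℓ ^ (n.factorization ℓ) := Nat.pow_pos hℓ.pos
    have hmn : ℓ ^ (n.factorization ℓ) + (n - ℓ ^ (n.factorization ℓ)) = n := by omega
    obtain ⟨S, hS⟩ := exists_sylow_le_young ℓ (ℓ ^ (n.factorization ℓ))
      (n - ℓ ^ (n.factorization ℓ)) n hℓ hmn hval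
    refine ⟨[ℓ ^ (n.factorization ℓ), n - ℓ ^ (n.factorization ℓ)], ?_, ?_, ?_, S, hS⟩
    · intro x hx
      rcases List.mem_cons.mp hx with rfl | hx
      · exact hm
      · rcases List.mem_cons.mp hx with rfl | hx
        · omega
        · simp at hx
    · simpa using hmn
    · simp
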